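/- The number of points of the representation variety Hom(π₁(Σ_g), AGL₁(F_q)) over a finite field F_q equals q^{2g} + q^{2g−1}((q−1)^{2g} − 1), where π₁(Σ_g) is the surface group with presentation ⟨a₁,b₁,…,a_g,b_g | ∏[a_i,b_i] = 1⟩. Equivalently, the number of 2g-tuples (A₁,B₁,…,A_g,B_g) in AGL₁(F_q)^{2g} with ∏ᵢ[Aᵢ,Bᵢ] = 1 equals q^{2g} + q^{2g−1}((q−1)^{2g} − 1). -/

import Mathlib

open Matrix Finset

section Aux

variable {F : Type*} [Field F] [Fintype F]

private def mm (a b : F) : Matrix (Fin 2) (Fin 2) F := !![a, b; 0, 1]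

private lemma mm_congr {a b a' b' : F} (h1 : a = a') (h2 : b = b') : mm a b = mm a' b' := by
  rw [h1, h2]

private lemma mm_mul (a b c d : F) : mm a b * mm c d = mm (a * c) (a * d + b) := by
  simp [mm, Matrix.mul_fin_two]

private lemma mm_inj {a b a' b' : F} (h : mm a b = mm a' b') : a = a' ∧ b = b' := by
  refine ⟨?_, ?_⟩
  · simpa [mm] using congrFun (congrFun h 0) 0
  · simpa [mm] using congrFun (congrFun h 0) 1

private lemma mm_one : mm (1 : F) 0 = 1 := by
  simp [mm, Matrix.one_fin_two]

private lemma mm_inv (a b : F) (ha : a ≠ 0) : (mm a b)⁻¹ = mm a⁻¹ (-(a⁻¹ * b)) := by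
  apply Matrix.inv_eq_right_inv
  rw [mm_mul, mul_inv_cancel₀ ha, ← mm_one]
  apply mm_congr rfl
  field_simp
  ring

private lemma mm_comm (a c : F) (ha : a ≠ 0) (hc : c ≠ 0) (b d : F) :
    mm a b * mm c d * (mm a b)⁻¹ * (mm c d)⁻¹ = mm 1 ((a - 1) * d - (c - 1) * b) := by
  rw [mm_inv a b ha, mm_inv c d hc, mm_mul, mm_mul, mm_mul]
  apply mm_congr
  · field_simp
  · field_simp
    ring

private lemma prod_mm (l : List F) : (l.map fun t => mm (1 : F) t).prod = mm 1 l.sum := by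
  induction l with
  | nil => simpa using mm_one.symm
  | cons h t ih =>
      rw [List.map_cons, List.prod_cons, List.sum_cons, ih, mm_mul]
      exact mm_congr (one_mul 1) (by ring)

private lemma prod_comm_eq {g : ℕ} (a b c d : Fin g → F) (ha : ∀ i, a i ≠ 0)
    (hc : ∀ i, c i ≠ 0) :
    (List.ofFn fun i =>
        mm (a i) (b i) * mm (c i) (d i) * (mm (a i) (b i))⁻¹ * (mm (c i) (d i))⁻¹).prod
      = mm 1 (∑ i, ((a i - 1) * d i - (c i - 1) * b i)) := by
  have h1 : (List.ofFn fun i =>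
        mm (a i) (b i) * mm (c i) (d i) * (mm (a i) (b i))⁻¹ * (mm (c i) (d i))⁻¹)
      = List.ofFn ((fun t => mm (1 : F) t) ∘ fun i => (a i - 1) * d i - (c i - 1) * b i) := by
    refine congrArg _ (funext fun i => ?_)
    exact mm_comm _ _ (ha i) (hc i) _ _
  rw [h1, ← List.map_ofFn, prod_mm, List.sum_ofFn]

private lemma card_ker_mul {V : Type*} [AddCommGroup V] [Fintype V]
    (φ : V →+ F) (hs : Function.Surjective φ) :
    Nat.card {y : V // φ y = 0} * Fintype.card F = Fintype.card V := by
  have e1 : Nat.card {y : V // φ y = 0} = Nat.card φ.ker :=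
    Nat.card_congr (Equiv.subtypeEquivRight fun y => by simp [AddMonoidHom.mem_ker])
  have e2 : Nat.card (V ⧸ φ.ker) = Fintype.card F := by
    rw [Nat.card_congr (QuotientAddGroup.quotientKerEquivOfSurjective φ hs).toEquiv]
    exact Nat.card_eq_fintype_card
  have e3 := AddSubgroup.card_eq_card_quotient_mul_card_addSubgroup φ.ker
  have e4 : Fintype.card V = Nat.card V := Nat.card_eq_fintype_card.symm
  rw [e1, e4, e3, e2]
  ring

private def Lhom {g : ℕ} (x : Fin g → Fˣ × Fˣ) : (Fin g → F × F) →+ F :=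
  AddMonoidHom.mk'
    (fun y => ∑ i, ((((x i).1 : F) - 1) * (y i).2 - (((x i).2 : F) - 1) * (y i).1))
    (fun y z => by
      rw [← Finset.sum_add_distrib]
      refine Finset.sum_congr rfl fun i _ => ?_
      simp only [Pi.add_apply, Prod.fst_add, Prod.snd_add]
      ring)

private lemma Lhom_apply {g : ℕ} (x : Fin g → Fˣ × Fˣ) (y : Fin g → F × F) :
    Lhom x y = ∑ i, ((((x i).1 : F) - 1) * (y i).2 - (((x i).2 : F) - 1) * (y i).1) := rfl

private lemma Lhom_surj {g : ℕ} (x : Fin g → Fˣ × Fˣ) (hx : x ≠ fun _ => (1, 1)) :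
    Function.Surjective (Lhom (F := F) x) := by
  classical
  obtain ⟨j, hj⟩ : ∃ j, x j ≠ (1, 1) := by
    by_contra h
    push_neg at h
    exact hx (funext h)
  intro t
  by_cases h1 : ((x j).1 : F) = 1
  · have h2 : ((x j).2 : F) - 1 ≠ 0 := by
      rw [sub_ne_zero]
      intro h2
      exact hj (Prod.ext (Units.ext (by simp [h1])) (Units.ext (by simp [h2])))
    refine ⟨Function.update 0 j (-(t / (((x j).2 : F) - 1)), 0), ?_⟩
    rw [Lhom_apply, Finset.sum_eq_single j]
    · rw [Function.update_self]
      simp only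
      field_simp
      ring
    · intro i _ hij
      rw [Function.update_of_ne hij]
      simp
    · simp
  · have h1' : ((x j).1 : F) - 1 ≠ 0 := sub_ne_zero.mpr h1
    refine ⟨Function.update 0 j (0, t / (((x j).1 : F) - 1)), ?_⟩
    rw [Lhom_apply, Finset.sum_eq_single j]
    · rw [Function.update_self]
      simp only
      field_simp
      ring
    · intro i _ hij
      rw [Function.update_of_ne hij]
      simp
    · simp

private lemma card_B (g : ℕ) (hg : 1 ≤ g) :
    Nat.card {w : Fin g → (Fˣ × F) × (Fˣ × F) //
        ∑ i, ((((w i).1.1 : F) - 1) * (w i).2.2 - (((w i).2.1 : F) - 1) * (w i).1.2) = 0}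
      = Fintype.card F ^ (2 * g)
        + ((Fintype.card F - 1) ^ (2 * g) - 1) * Fintype.card F ^ (2 * g - 1) := by
  classical
  set q := Fintype.card F with hq
  have hq0 : 0 < q := Fintype.card_pos
  -- split as a sigma type
  have e0 : {w : Fin g → (Fˣ × F) × (Fˣ × F) //
        ∑ i, ((((w i).1.1 : F) - 1) * (w i).2.2 - (((w i).2.1 : F) - 1) * (w i).1.2) = 0}
      ≃ Σ x : Fin g → Fˣ × Fˣ, {y : Fin g → F × F //
          ∑ i, ((((x i).1 : F) - 1) * (y i).2 - (((x i).2 : F) - 1) * (y i).1) = 0} :=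
    { toFun := fun w => ⟨fun i => ((w.1 i).1.1, (w.1 i).2.1),
        fun i => ((w.1 i).1.2, (w.1 i).2.2), w.2⟩
      invFun := fun s => ⟨fun i => (((s.1 i).1, (s.2.1 i).1), ((s.1 i).2, (s.2.1 i).2)), s.2.2⟩
      left_inv := fun w => rfl
      right_inv := fun s => rfl }
  rw [Nat.card_congr e0, Nat.card_eq_fintype_card, Fintype.card_sigma]
  have hY : Fintype.card (Fin g → F × F) = q ^ (2 * g) := by
    rw [Fintype.card_fun, Fintype.card_prod, Fintype.card_fin, two_mul, pow_add, mul_pow]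
  -- the fiber over the trivial x
  have hx0 : Fintype.card {y : Fin g → F × F //
      ∑ i, (((((fun _ => ((1 : Fˣ), (1 : Fˣ))) i).1 : F) - 1) * (y i).2
        - ((((fun _ => ((1 : Fˣ), (1 : Fˣ))) i).2 : F) - 1) * (y i).1) = 0} = q ^ (2 * g) := by
    rw [← Nat.card_eq_fintype_card, Nat.card_congr (Equiv.subtypeUnivEquiv fun y => by simp),
      Nat.card_eq_fintype_card, hY]
  -- fibers over nontrivial x
  have hxne : ∀ x : Fin g → Fˣ × Fˣ, x ≠ (fun _ => ((1 : Fˣ), (1 : Fˣ))) →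
      Fintype.card {y : Fin g → F × F //
        ∑ i, ((((x i).1 : F) - 1) * (y i).2 - (((x i).2 : F) - 1) * (y i).1) = 0}
      = q ^ (2 * g - 1) := by
    intro x hx
    have hk := card_ker_mul (Lhom x) (Lhom_surj x hx)
    have e1 : Nat.card {y : Fin g → F × F // Lhom x y = 0}
        = Fintype.card {y : Fin g → F × F //
          ∑ i, ((((x i).1 : F) - 1) * (y i).2 - (((x i).2 : F) - 1) * (y i).1) = 0} := by
      rw [← Nat.card_eq_fintype_card]
      exact Nat.card_congr (Equiv.subtypeEquivRight fun y => by rw [Lhom_apply])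
    rw [e1, hY, ← hq] at hk
    have h2g : 2 * g = (2 * g - 1) + 1 :=
      (Nat.sub_add_cancel (Nat.mul_pos (by norm_num) hg)).symm
    rw [h2g, pow_succ] at hk
    exact Nat.eq_of_mul_eq_mul_right hq0 hk
  rw [← Finset.add_sum_erase _ _ (Finset.mem_univ (fun _ => ((1 : Fˣ), (1 : Fˣ)))), hx0]
  have hsum : ∑ x ∈ (univ : Finset (Fin g → Fˣ × Fˣ)).erase (fun _ => ((1 : Fˣ), (1 : Fˣ))),
      Fintype.card {y : Fin g → F × F //
        ∑ i, ((((x i).1 : F) - 1) * (y i).2 - (((x i).2 : F) - 1) * (y i).1) = 0}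
      = ((q - 1) ^ (2 * g) - 1) * q ^ (2 * g - 1) := by
    rw [Finset.sum_congr rfl fun x hx => hxne x (Finset.mem_erase.mp hx).1,
      Finset.sum_const, smul_eq_mul, Finset.card_erase_of_mem (Finset.mem_univ _),
      Finset.card_univ]
    congr 2
    rw [Fintype.card_fun, Fintype.card_prod, Fintype.card_fin, Fintype.card_units,
      two_mul, pow_add, mul_pow]
  rw [hsum]

private lemma card_A (g : ℕ) :
    Nat.card {v : Fin g → Matrix (Fin 2) (Fin 2) F × Matrix (Fin 2) (Fin 2) F //
        (∀ i, (∃ a b : F, a ≠ 0 ∧ (v i).1 = !![a, b; 0, 1]) ∧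
              (∃ a b : F, a ≠ 0 ∧ (v i).2 = !![a, b; 0, 1])) ∧
        (List.ofFn fun i => (v i).1 * (v i).2 * ((v i).1)⁻¹ * ((v i).2)⁻¹).prod = 1}
      = Nat.card {w : Fin g → (Fˣ × F) × (Fˣ × F) //
        ∑ i, ((((w i).1.1 : F) - 1) * (w i).2.2 - (((w i).2.1 : F) - 1) * (w i).1.2) = 0} := by
  apply Nat.card_congr
  apply Equiv.symm
  refine Equiv.ofBijective (fun w =>
    ⟨fun i => (mm ((w.1 i).1.1 : F) (w.1 i).1.2, mm ((w.1 i).2.1 : F) (w.1 i).2.2),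
      fun i => ⟨⟨_, _, Units.ne_zero _, rfl⟩, ⟨_, _, Units.ne_zero _, rfl⟩⟩, by
        rw [prod_comm_eq (fun i => ((w.1 i).1.1 : F)) (fun i => (w.1 i).1.2)
          (fun i => ((w.1 i).2.1 : F)) (fun i => (w.1 i).2.2)
          (fun i => Units.ne_zero _) (fun i => Units.ne_zero _), w.2, mm_one]⟩) ⟨?_, ?_⟩
  · intro w w' h
    apply Subtype.ext
    funext i
    have hi := congrFun (congrArg Subtype.val h) i
    have h1 := mm_inj (congrArg Prod.fst hi)
    have h2 := mm_inj (congrArg Prod.snd hi)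
    exact Prod.ext (Prod.ext (Units.ext h1.1) h1.2) (Prod.ext (Units.ext h2.1) h2.2)
  · rintro ⟨v, hform, hprod⟩
    choose a b ha hab using fun i => (hform i).1
    choose c d hc hcd using fun i => (hform i).2
    have hrew : (List.ofFn fun i => (v i).1 * (v i).2 * ((v i).1)⁻¹ * ((v i).2)⁻¹)
        = List.ofFn fun i =>
            mm (a i) (b i) * mm (c i) (d i) * (mm (a i) (b i))⁻¹ * (mm (c i) (d i))⁻¹ := by
      refine congrArg _ (funext fun i => ?_)
      rw [hab i, hcd i]
      rfl
    rw [hrew, prod_comm_eq a b c d ha hc, ← mm_one] at hprod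
    have hsum : ∑ i, ((a i - 1) * d i - (c i - 1) * b i) = 0 := (mm_inj hprod).1.symm ▸
      (mm_inj hprod).2
    refine ⟨⟨fun i => ((Units.mk0 (a i) (ha i), b i), (Units.mk0 (c i) (hc i), d i)), ?_⟩, ?_⟩
    · simpa using hsum
    · apply Subtype.ext
      funext i
      exact Prod.ext (by simpa [mm] using (hab i).symm) (by simpa [mm] using (hcd i).symm)

end Aux

/-- The number of `2g`-tuples `(A₁,B₁,…,A_g,B_g)` in `AGL₁(F_q)` (matrices `!![a,b;0,1]`,
`a ≠ 0`) with `∏ᵢ [Aᵢ,Bᵢ] = 1` equals `q^(2g) + q^(2g-1)((q-1)^(2g) - 1)`. -/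
theorem stmt9 {F : Type*} [Field F] [Fintype F] (g : ℕ) (hg : 1 ≤ g) :
    (Nat.card {v : Fin g → Matrix (Fin 2) (Fin 2) F × Matrix (Fin 2) (Fin 2) F //
        (∀ i, (∃ a b : F, a ≠ 0 ∧ (v i).1 = !![a, b; 0, 1]) ∧
              (∃ a b : F, a ≠ 0 ∧ (v i).2 = !![a, b; 0, 1])) ∧
        (List.ofFn fun i => (v i).1 * (v i).2 * ((v i).1)⁻¹ * ((v i).2)⁻¹).prod = 1} : ℤ)
      = (Fintype.card F : ℤ) ^ (2 * g)
        + (Fintype.card F : ℤ) ^ (2 * g - 1) * (((Fintype.card F : ℤ) - 1) ^ (2 * g) - 1) := by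
  rw [card_A g, card_B g hg]
  have hq2 : 2 ≤ Fintype.card F := Fintype.one_lt_card
  have h1 : 1 ≤ (Fintype.card F - 1) ^ (2 * g) := Nat.one_le_pow _ _ (by omega)
  push_cast [Nat.cast_sub h1, Nat.cast_sub (by omega : 1 ≤ Fintype.card F)]
  ring
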